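/- An undirected graph is chordal if and only if it has a perfect elimination ordering, i.e., an ordering of its vertices such that for every vertex v, the set consisting of v together with its neighbors occurring earlier in the ordering forms a clique. -/

import Mathlib

/-- A graph is chordal if every cycle of length at least four has a chord:
an edge of the graph connecting two vertices of the cycle that is not an edge of the cycle. -/
def IsChordal {V : Type*} (G : SimpleGraph V) : Prop :=
  ∀ ⦃v : V⦄ (c : G.Walk v v), c.IsCycle → 4 ≤ c.length →
    ∃ u w : V, u ∈ c.support ∧ w ∈ c.support ∧ G.Adj u w ∧ s(u, w) ∉ c.edges

/-- A perfect elimination ordering: an ordering of the vertices such that every vertex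
together with its neighbors occurring earlier in the ordering forms a clique. -/
def IsPEO {V : Type*} [Fintype V] (G : SimpleGraph V) (f : V ≃ Fin (Fintype.card V)) : Prop :=
  ∀ v : V, G.IsClique ({v} ∪ {u : V | G.Adj u v ∧ f u < f v})

namespace ChordalAux
open SimpleGraph Walk



def Simplicial {V : Type*} (G : SimpleGraph V) (v : V) : Prop :=
  G.IsClique ({v} ∪ {u : V | G.Adj u v})

def ReachAvoid {V : Type*} (G : SimpleGraph V) (S : Set V) (x y : V) : Prop :=
  ∃ p : G.Walk x y, ∀ z ∈ p.support, z ∉ S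

variable {V : Type*} {G : SimpleGraph V} {S : Set V} {x y z : V}

lemma ra_refl (hx : x ∉ S) : ReachAvoid G S x x :=
  ⟨Walk.nil, by simpa using hx⟩

lemma ra_left (h : ReachAvoid G S x y) : x ∉ S := by
  obtain ⟨p, hp⟩ := h; exact hp x p.start_mem_support

lemma ra_right (h : ReachAvoid G S x y) : y ∉ S := by
  obtain ⟨p, hp⟩ := h; exact hp y p.end_mem_support

lemma ra_symm (h : ReachAvoid G S x y) : ReachAvoid G S y x := by
  obtain ⟨p, hp⟩ := h
  exact ⟨p.reverse, fun z hz => hp z (by rwa [Walk.support_reverse, List.mem_reverse] at hz)⟩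

lemma ra_trans (h : ReachAvoid G S x y) (h' : ReachAvoid G S y z) : ReachAvoid G S x z := by
  obtain ⟨p, hp⟩ := h; obtain ⟨q, hq⟩ := h'
  refine ⟨p.append q, fun z hz => ?_⟩
  rw [Walk.mem_support_append_iff] at hz
  exact hz.elim (hp z) (hq z)

lemma ra_adj (h : ReachAvoid G S x y) (hadj : G.Adj y z) (hz : z ∉ S) : ReachAvoid G S x z :=
  ra_trans h ⟨Walk.cons hadj Walk.nil, by
    intro w hw
    simp only [Walk.support_cons, Walk.support_nil, List.mem_cons, List.mem_singleton,
      List.not_mem_nil, or_false] at hw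
    rcases hw with rfl | rfl
    · exact ra_right h
    · exact hz⟩

lemma ra_of_mem_support (h : ReachAvoid G S x y) {p : G.Walk x y}
    (hp : ∀ w ∈ p.support, w ∉ S) (hz : z ∈ p.support) : ReachAvoid G S x z := by
  classical
  refine ⟨p.takeUntil z hz, fun w hw => hp w (p.support_takeUntil_subset hz hw)⟩


lemma isChordal'_induce {V : Type*} {G : SimpleGraph V} (hG : IsChordal G) (s : Set V) :
    IsChordal (G.induce s) := by
  intro v c hc hl
  let φ : G.induce s →g G := ⟨Subtype.val, fun {a b} h => h⟩
  have hinj : Function.Injective φ := Subtype.val_injective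
  have hc' : (c.map φ).IsCycle := hc.map hinj
  have hl' : 4 ≤ (c.map φ).length := by rwa [Walk.length_map]
  obtain ⟨u, w, hu, hw, huw, he⟩ := hG (c.map φ) hc' hl'
  rw [Walk.support_map, List.mem_map] at hu hw
  obtain ⟨u', hu', rfl⟩ := hu
  obtain ⟨w', hw', rfl⟩ := hw
  refine ⟨u', w', hu', hw', huw, fun hmem => he ?_⟩
  rw [Walk.edges_map, List.mem_map]
  exact ⟨s(u', w'), hmem, rfl⟩



/-- key cycle structure lemma -/
lemma cycle_ends {V : Type*} {G : SimpleGraph V} {v : V} (c : G.Walk v v)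
    (hc : c.IsCycle) (hl : 4 ≤ c.length) :
    ∃ x y : V, x ∈ c.support.tail ∧ y ∈ c.support.tail ∧ x ≠ y ∧ x ≠ v ∧ y ≠ v ∧
      G.Adj v x ∧ G.Adj v y ∧ s(x, y) ∉ c.edges := by
  cases c with
  | nil => simp at hl
  | @cons _ x _ h q =>
    rw [Walk.cons_isCycle_iff] at hc
    obtain ⟨hq, he⟩ := hc
    have hxv : x ≠ v := fun hh => by subst hh; exact G.irrefl h
    have hq3 : 3 ≤ q.length := by simpa using Nat.le_of_succ_le_succ hl
    have hqr : q.reverse.IsPath := hq.reverse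
    obtain ⟨y, h2, r, hr⟩ := Walk.exists_eq_cons_of_ne (fun hh => hxv hh.symm) q.reverse
    have hrl : 2 ≤ r.length := by
      have := congrArg Walk.length hr
      simp [Walk.length_reverse] at this
      omega
    have hrp : r.IsPath := by rw [hr] at hqr; exact hqr.of_cons
    have hynv : y ≠ v := fun hh => by subst hh; exact G.irrefl h2
    have hsupr : q.reverse.support = v :: r.support := by rw [hr, Walk.support_cons]
    have hnd : (v :: r.support).Nodup := by rw [← hsupr]; exact hqr.support_nodup
    have hxy : x ≠ y := by
      rintro rfl
      have : r.IsPath := hrp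
      rw [Walk.isPath_iff_eq_nil] at this
      rw [this] at hrl; simp at hrl
    have hymem : y ∈ q.support := by
      have : y ∈ q.reverse.support := by rw [hsupr]; exact List.mem_cons_of_mem _ r.start_mem_support
      rwa [Walk.support_reverse, List.mem_reverse] at this
    refine ⟨x, y, ?_, ?_, hxy, hxv, hynv, h, h2, ?_⟩
    · simp
    · simp [hymem]
    · -- chord not in edges
      rw [Walk.edges_cons, List.mem_cons]
      rintro (hmem | hmem)
      · rw [Sym2.eq_iff] at hmem
        rcases hmem with ⟨h1, _⟩ | ⟨_, h2'⟩
        · exact hxv h1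
        · exact hynv h2'
      · -- s(x,y) ∈ q.edges
        have : s(x, y) ∈ q.reverse.edges := by
          rw [Walk.edges_reverse, List.mem_reverse]; exact hmem
        rw [hr, Walk.edges_cons, List.mem_cons] at this
        rcases this with hmem2 | hmem2
        · rw [Sym2.eq_iff] at hmem2
          rcases hmem2 with ⟨h1, _⟩ | ⟨h1, _⟩
          · exact hxv h1
          · exact hxy h1
        · -- s(x,y) ∈ r.edges, r : Walk y x
          obtain ⟨z, h3, r', hr'⟩ := Walk.exists_eq_cons_of_ne (Ne.symm hxy) r
          rw [hr', Walk.edges_cons, List.mem_cons] at hmem2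
          rcases hmem2 with hmem3 | hmem3
          · rw [Sym2.eq_iff] at hmem3
            rcases hmem3 with ⟨h1, _⟩ | ⟨h1, _⟩
            · exact hxy h1
            · subst h1
              -- r' : Walk x x
              have hr'p : r'.IsPath := by rw [hr'] at hrp; exact hrp.of_cons
              rw [Walk.isPath_iff_eq_nil] at hr'p
              have := congrArg Walk.length hr'
              rw [hr'p] at this; simp at this; omega
          · have hy : y ∈ r'.support := r'.snd_mem_support_of_mem_edges hmem3
            have : r.support = y :: r'.support := by rw [hr', Walk.support_cons]
            have hnd' := hrp.support_nodup
            rw [this, List.nodup_cons] at hnd'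
            exact hnd'.1 hy



private lemma exists_shorter_aux {V : Type*} [DecidableEq V] {G : SimpleGraph V} {s t : V}
    (p : G.Walk s t) {w : V} (hw : w ∈ p.support)
    (huw : G.Adj s w) (he : s(s, w) ∉ p.edges) (hst : s(s, w) ≠ s(s, t)) :
    ∃ q : G.Walk s t, q.length < p.length ∧ ∀ x ∈ q.support, x ∈ p.support := by
  cases p with
  | nil =>
    rw [Walk.support_nil, List.mem_singleton] at hw
    subst hw; exact absurd huw (G.irrefl)
  | @cons _ x₁ _ h p' =>
    have hws : w ≠ s := fun hh => by subst hh; exact G.irrefl huw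
    have hw' : w ∈ p'.support := by
      rw [Walk.support_cons, List.mem_cons] at hw
      exact hw.resolve_left hws
    have hwt : w ≠ t := by
      rintro rfl; exact hst rfl
    have hx₁w : x₁ ≠ w := by
      rintro rfl
      exact he (by rw [Walk.edges_cons]; exact List.mem_cons_self)
    refine ⟨Walk.cons huw (p'.dropUntil w hw'), ?_, ?_⟩
    · have hspec := congrArg Walk.length (p'.take_spec hw')
      rw [Walk.length_append] at hspec
      have htU : (p'.takeUntil w hw').length ≠ 0 := fun hh => hx₁w (Walk.eq_of_length_eq_zero hh)
      rw [Walk.length_cons, Walk.length_cons]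
      omega
    · intro z hz
      rw [Walk.support_cons, List.mem_cons] at hz ⊢
      rcases hz with rfl | hz
      · exact Or.inl rfl
      · exact Or.inr (p'.support_dropUntil_subset hw' hz)

lemma exists_shorter {V : Type*} {G : SimpleGraph V} : ∀ {s t : V} (p : G.Walk s t) {u w : V},
    u ∈ p.support → w ∈ p.support → G.Adj u w → s(u, w) ∉ p.edges → s(u, w) ≠ s(s, t) →
    ∃ q : G.Walk s t, q.length < p.length ∧ ∀ x ∈ q.support, x ∈ p.support := by
  classical
  intro s t p
  induction p with
  | nil =>
    intro u w hu hw huw _ _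
    rw [Walk.support_nil, List.mem_singleton] at hu hw
    subst hu; subst hw; exact absurd huw (G.irrefl)
  | @cons s x₁ t h p' ih =>
    intro u w hu hw huw he hst
    by_cases hus : u = s
    · subst hus; exact exists_shorter_aux (Walk.cons h p') hw huw he hst
    by_cases hws : w = s
    · subst hws
      have := exists_shorter_aux (Walk.cons h p') hu huw.symm
        (by rwa [Sym2.eq_swap]) (by rwa [Sym2.eq_swap])
      exact this
    · have hu' : u ∈ p'.support := by
        rw [Walk.support_cons, List.mem_cons] at hu; exact hu.resolve_left hus
      have hw' : w ∈ p'.support := by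
        rw [Walk.support_cons, List.mem_cons] at hw; exact hw.resolve_left hws
      have he' : s(u, w) ∉ p'.edges := fun hh =>
        he (by rw [Walk.edges_cons]; exact List.mem_cons_of_mem _ hh)
      by_cases hch : s(u, w) = s(x₁, t)
      · -- shortcut edge from x₁ to t
        have hadj : G.Adj x₁ t := by
          rw [Sym2.eq_iff] at hch
          rcases hch with ⟨rfl, rfl⟩ | ⟨rfl, rfl⟩
          · exact huw
          · exact huw.symm
        have hp'len : 2 ≤ p'.length := by
          rcases Nat.lt_or_ge p'.length 2 with hlt | hge
          · interval_cases hlen : p'.length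
            · exact absurd (Walk.eq_of_length_eq_zero hlen) hadj.ne
            · -- p' is a single edge, so s(x₁,t) ∈ p'.edges
              exfalso
              cases p' with
              | nil => simp at hlen
              | @cons _ z _ h2 p'' =>
                have hz : z = t := Walk.eq_of_length_eq_zero (by simpa using hlen)
                subst hz
                exact he' (hch ▸ (by rw [Walk.edges_cons]; exact List.mem_cons_self))
          · exact hge
        refine ⟨Walk.cons h (Walk.cons hadj Walk.nil), by simp; omega, ?_⟩
        intro z hz
        simp only [Walk.support_cons, Walk.support_nil, List.mem_cons,
          List.mem_singleton, List.not_mem_nil, or_false] at hz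
        rcases hz with rfl | rfl | rfl
        · exact Walk.start_mem_support _
        · rw [Walk.support_cons, List.mem_cons]; exact Or.inr p'.start_mem_support
        · rw [Walk.support_cons, List.mem_cons]; exact Or.inr p'.end_mem_support
      · obtain ⟨q', hq'len, hq'supp⟩ := ih hu' hw' huw he' hch
        refine ⟨Walk.cons h q', by simpa using hq'len, ?_⟩
        intro z hz
        rw [Walk.support_cons, List.mem_cons] at hz ⊢
        exact hz.imp id (fun hh => hq'supp z hh)

lemma nbr_of_walk {V : Type*} {G : SimpleGraph V} {S : Set V} {a b s' : V}
    (p : G.Walk a b) (hp : ∀ z ∈ p.support, z ∉ S \ {s'}) (hs : s' ∈ p.support)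
    (has : a ∉ S) (hane : a ≠ s') :
    ∃ z, G.Adj s' z ∧ ReachAvoid G S a z := by
  classical
  set q := p.takeUntil s' hs with hq
  have hqsub : ∀ z ∈ q.support, z ∉ S \ {s'} := fun z hz =>
    hp z (p.support_takeUntil_subset hs hz)
  have hcount : q.support.count s' = 1 := p.count_support_takeUntil_eq_one hs
  obtain ⟨z, h2, r, hr⟩ := Walk.exists_eq_cons_of_ne (Ne.symm hane) q.reverse
  have hsupr : q.reverse.support = s' :: r.support := by rw [hr, Walk.support_cons]
  have hs_not_r : s' ∉ r.support := by
    have hc2 : q.reverse.support.count s' = 1 := by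
      rw [Walk.support_reverse, List.count_reverse]; exact hcount
    rw [hsupr, List.count_cons_self] at hc2
    intro hmem
    have := List.count_pos_iff.mpr hmem  -- may need name fix
    omega
  have hrS : ∀ w ∈ r.support, w ∉ S := by
    intro w hw
    have hw' : w ∈ q.support := by
      have h3 : w ∈ q.reverse.support := by
        rw [hr, Walk.support_cons]; exact List.mem_cons_of_mem _ hw
      rwa [Walk.support_reverse, List.mem_reverse] at h3
    have := hqsub w hw'
    intro hwS
    exact this ⟨hwS, fun hh => (hh ▸ hs_not_r : s' ∉ r.support) (hh ▸ hw)⟩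
  have hzr : z ∈ r.support := r.start_mem_support
  refine ⟨z, h2, ⟨r.reverse, ?_⟩⟩
  intro w hw
  rw [Walk.support_reverse, List.mem_reverse] at hw
  exact hrS w hw

lemma side_path {V : Type*} {G : SimpleGraph V} {S : Set V} {c s' t' : V}
    (hne : s' ≠ t')
    (hxs : ∃ x, ReachAvoid G S c x ∧ G.Adj s' x) (hyt : ∃ y, ReachAvoid G S c y ∧ G.Adj t' y) :
    ∃ p : G.Walk s' t', (∀ z ∈ p.support, z = s' ∨ z = t' ∨ ReachAvoid G S c z) ∧ p.IsPath ∧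
      (∀ q : G.Walk s' t', (∀ z ∈ q.support, z = s' ∨ z = t' ∨ ReachAvoid G S c z) →
        p.length ≤ q.length) := by
  classical
  obtain ⟨x, hx, hsx⟩ := hxs
  obtain ⟨y, hy, hty⟩ := hyt
  obtain ⟨w0, hw0⟩ := ra_trans (ra_symm hx) hy
  have hw0mem : ∀ z ∈ w0.support, ReachAvoid G S c z := by
    intro z hz
    exact ra_trans hx (ra_of_mem_support ⟨w0, hw0⟩ hw0 hz)
  have hCond : ∃ q : G.Walk s' t', ∀ z ∈ q.support, z = s' ∨ z = t' ∨ ReachAvoid G S c z := by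
    refine ⟨Walk.cons hsx (w0.append (Walk.cons hty.symm Walk.nil)), ?_⟩
    intro z hz
    rw [Walk.support_cons, List.mem_cons, Walk.mem_support_append_iff] at hz
    rcases hz with rfl | hz | hz
    · exact Or.inl rfl
    · exact Or.inr (Or.inr (hw0mem z hz))
    · simp only [Walk.support_cons, Walk.support_nil, List.mem_cons, List.mem_singleton,
        List.not_mem_nil, or_false] at hz
      rcases hz with rfl | rfl
      · exact Or.inr (Or.inr (hw0mem z w0.end_mem_support))
      · exact Or.inr (Or.inl rfl)
  set L : Set ℕ := {k | ∃ q : G.Walk s' t',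
    (∀ z ∈ q.support, z = s' ∨ z = t' ∨ ReachAvoid G S c z) ∧ q.length = k} with hL
  have hLne : L.Nonempty := by
    obtain ⟨q, hq⟩ := hCond
    exact ⟨q.length, q, hq, rfl⟩
  obtain ⟨q0, hq0cond, hq0len⟩ := Nat.sInf_mem hLne
  refine ⟨q0.bypass, ?_, q0.bypass_isPath, ?_⟩
  · intro z hz
    exact hq0cond z (q0.support_bypass_subset hz)
  · intro q hq
    have hqL : q.length ∈ L := ⟨q, hq, rfl⟩
    have := Nat.sInf_le hqL
    have hb := q0.length_bypass_le
    omega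

lemma simplicial_of_complete {V : Type*} {G : SimpleGraph V}
    (h : ∀ p q : V, p ≠ q → G.Adj p q) (v : V) : Simplicial G v :=
  fun _ _ _ _ hne => h _ _ hne

lemma side_lift {V : Type*} {G : SimpleGraph V} {S A : Set V}
    (hA_S : ∀ x ∈ A, x ∉ S)
    (hA_cl : ∀ x ∈ A, ∀ y, G.Adj x y → y ∉ S → y ∈ A) {x : V} (hx : x ∈ A)
    (hsimp : Simplicial (G.induce (A ∪ S)) ⟨x, Or.inl hx⟩) : Simplicial G x := by
  have hmemAS : ∀ u, u ∈ ({x} ∪ {u : V | G.Adj u x} : Set V) → u ∈ A ∪ S := by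
    intro u hu
    rcases hu with rfl | hu
    · exact Or.inl hx
    · by_cases huS : u ∈ S
      · exact Or.inr huS
      · exact Or.inl (hA_cl x hx u (G.adj_symm hu) huS)
  intro u hu w hw hne
  have hu' : (⟨u, hmemAS u hu⟩ : ↥(A ∪ S)) ∈
      ({(⟨x, Or.inl hx⟩ : ↥(A ∪ S))} ∪ {u' | (G.induce (A ∪ S)).Adj u' ⟨x, Or.inl hx⟩} :
        Set ↥(A ∪ S)) := by
    rcases hu with rfl | hu
    · exact Or.inl rfl
    · exact Or.inr hu
  have hw' : (⟨w, hmemAS w hw⟩ : ↥(A ∪ S)) ∈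
      ({(⟨x, Or.inl hx⟩ : ↥(A ∪ S))} ∪ {u' | (G.induce (A ∪ S)).Adj u' ⟨x, Or.inl hx⟩} :
        Set ↥(A ∪ S)) := by
    rcases hw with rfl | hw
    · exact Or.inl rfl
    · exact Or.inr hw
  have := hsimp hu' hw' (fun hc => hne (congrArg Subtype.val hc))
  exact this

universe u

lemma dirac_pair : ∀ (n : ℕ) {V : Type u} [Fintype V] (G : SimpleGraph V),
    Fintype.card V ≤ n → IsChordal G → ∀ a b : V, a ≠ b → ¬G.Adj a b →
    ∃ v w : V, Simplicial G v ∧ Simplicial G w ∧ v ≠ w ∧ ¬G.Adj v w := by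
  intro n
  induction n with
  | zero =>
    intro V _ G hcard _ a _ _ _
    have : IsEmpty V := Fintype.card_eq_zero_iff.mp (Nat.le_zero.mp hcard)
    exact this.elim a
  | succ n ih =>
    intro V _ G hcard hch a b hab hnadj
    classical
    -- minimal separator
    set Sep : Finset V → Prop :=
      fun S => a ∉ S ∧ b ∉ S ∧ ¬ReachAvoid G (↑S) a b with hSepDef
    have hsepEx : Sep (Finset.univ \ {a, b}) := by
      refine ⟨by simp, by simp, ?_⟩
      rintro ⟨p, hp⟩
      cases p with
      | nil => exact hab rfl
      | @cons _ x _ h p' =>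
        have hx : x ∈ p'.support := p'.start_mem_support
        have hxsup : x ∈ (Walk.cons h p').support := by
          rw [Walk.support_cons]; exact List.mem_cons_of_mem _ hx
        have := hp x hxsup
        simp only [Finset.coe_sdiff, Finset.coe_univ, Finset.coe_insert, Finset.coe_singleton,
          Set.mem_diff, Set.mem_univ, true_and, Set.mem_insert_iff, Set.mem_singleton_iff,
          not_not] at this
        rcases this with rfl | rfl
        · exact G.irrefl h
        · exact hnadj h
    obtain ⟨S, hSmem, hSmin⟩ := (Finset.univ.filter Sep).exists_min_image Finset.card
      ⟨_, Finset.mem_filter.mpr ⟨Finset.mem_univ _, hsepEx⟩⟩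
    have hSsep : Sep S := (Finset.mem_filter.mp hSmem).2
    have hSmin' : ∀ T : Finset V, Sep T → S.card ≤ T.card := fun T hT =>
      hSmin T (Finset.mem_filter.mpr ⟨Finset.mem_univ _, hT⟩)
    set A : Set V := {x | ReachAvoid G (↑S) a x} with hA
    set B : Set V := {x | ReachAvoid G (↑S) b x} with hB
    have haS : a ∉ (↑S : Set V) := hSsep.1
    have hbS : b ∉ (↑S : Set V) := hSsep.2.1
    have haA : a ∈ A := ra_refl haS
    have hbB : b ∈ B := ra_refl hbS
    have hAB : ∀ x, x ∈ A → x ∉ B := fun x hx hxB =>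
      hSsep.2.2 (ra_trans hx (ra_symm hxB))
    have hAS : ∀ x ∈ A, x ∉ (↑S : Set V) := fun x hx => ra_right hx
    have hBS : ∀ x ∈ B, x ∉ (↑S : Set V) := fun x hx => ra_right hx
    -- neighbors of separator vertices on each side
    have hnbr : ∀ s' ∈ S, (∃ x, x ∈ A ∧ G.Adj s' x) ∧ (∃ y, y ∈ B ∧ G.Adj s' y) := by
      intro s' hs'
      have hcardlt : (S.erase s').card < S.card := Finset.card_erase_lt_of_mem hs'
      have hnotsep : ¬ Sep (S.erase s') := fun hcon => by
        have := hSmin' _ hcon; omega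
      have h1 : a ∉ S.erase s' := fun h => hSsep.1 (Finset.mem_of_mem_erase h)
      have h2 : b ∉ S.erase s' := fun h => hSsep.2.1 (Finset.mem_of_mem_erase h)
      have hRA : ReachAvoid G (↑(S.erase s')) a b := by
        by_contra hcon
        exact hnotsep ⟨h1, h2, hcon⟩
      obtain ⟨p, hpav⟩ := hRA
      have hperase : ∀ z ∈ p.support, z ∉ (↑S : Set V) \ {s'} := by
        intro z hz hmem
        apply hpav z hz
        rw [Finset.coe_erase]
        exact hmem
      have hs'mem : s' ∈ p.support := by
        by_contra hns
        apply hSsep.2.2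
        refine ⟨p, fun z hz hzS => ?_⟩
        rcases eq_or_ne z s' with rfl | hzne
        · exact hns hz
        · exact hperase z hz ⟨hzS, hzne⟩
      have hanes : a ≠ s' := fun h => haS (h ▸ (hs' : s' ∈ S))
      have hbnes : b ≠ s' := fun h => hbS (h ▸ (hs' : s' ∈ S))
      constructor
      · obtain ⟨z, hzadj, hzra⟩ := nbr_of_walk p hperase hs'mem haS hanes
        exact ⟨z, hzra, hzadj⟩
      · have hperase' : ∀ z ∈ p.reverse.support, z ∉ (↑S : Set V) \ {s'} := by
          intro z hz
          rw [Walk.support_reverse, List.mem_reverse] at hz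
          exact hperase z hz
        have hs'mem' : s' ∈ p.reverse.support := by
          rwa [Walk.support_reverse, List.mem_reverse]
        obtain ⟨z, hzadj, hzra⟩ := nbr_of_walk p.reverse hperase' hs'mem' hbS hbnes
        exact ⟨z, hzra, hzadj⟩
    -- S is a clique
    have hSclique : ∀ s' t' : V, s' ∈ S → t' ∈ S → s' ≠ t' → G.Adj s' t' := by
      intro s' t' hs'S ht'S hnest
      by_contra hst
      obtain ⟨pA, hpAcond, hpApath, hpAmin⟩ := side_path hnest
        (let h := (hnbr s' hs'S).1; ⟨h.choose, h.choose_spec.1, h.choose_spec.2⟩)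
        (let h := (hnbr t' ht'S).1; ⟨h.choose, h.choose_spec.1, h.choose_spec.2⟩)
      obtain ⟨pB, hpBcond, hpBpath, hpBmin⟩ := side_path hnest
        (let h := (hnbr s' hs'S).2; ⟨h.choose, h.choose_spec.1, h.choose_spec.2⟩)
        (let h := (hnbr t' ht'S).2; ⟨h.choose, h.choose_spec.1, h.choose_spec.2⟩)
      have hpA2 : 2 ≤ pA.length := by
        rcases Nat.lt_or_ge pA.length 2 with hlt | hge
        · interval_cases hlen : pA.length
          · exact absurd (Walk.eq_of_length_eq_zero hlen) hnest
          · exact absurd (Walk.adj_of_length_eq_one hlen) hst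
        · exact hge
      have hpB2 : 2 ≤ pB.length := by
        rcases Nat.lt_or_ge pB.length 2 with hlt | hge
        · interval_cases hlen : pB.length
          · exact absurd (Walk.eq_of_length_eq_zero hlen) hnest
          · exact absurd (Walk.adj_of_length_eq_one hlen) hst
        · exact hge
      have hs'A : s' ∉ A := fun h => hAS _ h hs'S
      have ht'A : t' ∉ A := fun h => hAS _ h ht'S
      have hs'B : s' ∉ B := fun h => hBS _ h hs'S
      have ht'B : t' ∉ B := fun h => hBS _ h ht'S
      -- the cycle
      set c : G.Walk s' s' := pA.append pB.reverse with hc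
      have hclen : c.length = pA.length + pB.length := by
        rw [hc, Walk.length_append, Walk.length_reverse]
      have hcsupp : ∀ z, z ∈ c.support ↔ z ∈ pA.support ∨ z ∈ pB.support := by
        intro z
        rw [hc, Walk.mem_support_append_iff, Walk.support_reverse, List.mem_reverse]
      -- edge sets
      have hedgeA : ∀ e ∈ pA.edges, e ∈ c.edges := by
        intro e he
        rw [hc, Walk.edges_append, List.mem_append]
        exact Or.inl he
      have hedgeB : ∀ e ∈ pB.edges, e ∈ c.edges := by
        intro e he
        rw [hc, Walk.edges_append, List.mem_append, Walk.edges_reverse, List.mem_reverse]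
        exact Or.inr he
      have hcIsCycle : c.IsCycle := by
        rw [Walk.isCycle_def]
        refine ⟨?_, ?_, ?_⟩
        · -- trail
          rw [Walk.isTrail_def, hc, Walk.edges_append, List.nodup_append]
          refine ⟨hpApath.isTrail.edges_nodup, hpBpath.reverse.isTrail.edges_nodup, ?_⟩
          intro e heA e2 heB hee
          rw [← hee] at heB
          have heB' : e ∈ pB.edges := by
            rwa [Walk.edges_reverse, List.mem_reverse] at heB
          induction e with
          | h u1 u2 =>
            have h1A : u1 ∈ pA.support := pA.fst_mem_support_of_mem_edges heA
            have h2A : u2 ∈ pA.support := pA.snd_mem_support_of_mem_edges heA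
            have h1B : u1 ∈ pB.support := pB.fst_mem_support_of_mem_edges heB'
            have h2B : u2 ∈ pB.support := pB.snd_mem_support_of_mem_edges heB'
            have hadj : G.Adj u1 u2 := pA.adj_of_mem_edges heA
            have h1 : u1 = s' ∨ u1 = t' := by
              rcases hpAcond u1 h1A with h | h | h
              · exact Or.inl h
              · exact Or.inr h
              · rcases hpBcond u1 h1B with h' | h' | h'
                · exact Or.inl h'
                · exact Or.inr h'
                · exact absurd h' (hAB _ h)
            have h2 : u2 = s' ∨ u2 = t' := by
              rcases hpAcond u2 h2A with h | h | h
              · exact Or.inl h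
              · exact Or.inr h
              · rcases hpBcond u2 h2B with h' | h' | h'
                · exact Or.inl h'
                · exact Or.inr h'
                · exact absurd h' (hAB _ h)
            rcases h1 with rfl | rfl <;> rcases h2 with rfl | rfl
            · exact G.irrefl hadj
            · exact hst hadj
            · exact hst hadj.symm
            · exact G.irrefl hadj
        · -- nonempty
          intro h
          have : c.length = 0 := by rw [h]; rfl
          omega
        · -- nodup
          have h1 : c.support = pA.support ++ pB.reverse.support.tail :=
            Walk.support_append pA pB.reverse
          have h2 : c.support.tail = pA.support.tail ++ pB.reverse.support.tail := by
            rw [h1, pA.support_eq_cons]; rfl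
          rw [h2, List.nodup_append]
          have hArev : pA.support.Nodup := hpApath.support_nodup
          have hBrev : pB.reverse.support.Nodup := hpBpath.reverse.support_nodup
          refine ⟨hArev.sublist (List.tail_sublist _), hBrev.sublist (List.tail_sublist _), ?_⟩
          intro z hzA z2 hzB hzz
          rw [← hzz] at hzB
          have hzA' : z ∈ pA.support := List.mem_of_mem_tail hzA
          have hzB'' : z ∈ pB.reverse.support := List.mem_of_mem_tail hzB
          have hzB' : z ∈ pB.support := by
            rwa [Walk.support_reverse, List.mem_reverse] at hzB''
          have hzs : z ≠ s' := by
            intro rfl'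
            subst rfl'
            have := pA.support_eq_cons
            rw [this, List.nodup_cons] at hArev
            exact hArev.1 hzA
          have hzt : z ≠ t' := by
            intro rfl'
            subst rfl'
            have := pB.reverse.support_eq_cons
            rw [this, List.nodup_cons] at hBrev
            exact hBrev.1 hzB
          rcases hpAcond z hzA' with h | h | h
          · exact hzs h
          · exact hzt h
          · rcases hpBcond z hzB' with h' | h' | h'
            · exact hzs h'
            · exact hzt h'
            · exact hAB z h h'
      obtain ⟨u, w, hu, hw, huw, hchord⟩ := hch c hcIsCycle (by omega)
      -- the chord cannot be s(s',t')
      have hchst : s(u, w) ≠ s(s', t') := by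
        intro hh
        rw [Sym2.eq_iff] at hh
        rcases hh with ⟨rfl, rfl⟩ | ⟨rfl, rfl⟩
        · exact hst huw
        · exact hst huw.symm
      -- shortcut derivations
      have hshortA : u ∈ pA.support → w ∈ pA.support → False := by
        intro hu' hw'
        have hne : s(u, w) ∉ pA.edges := fun hh => hchord (hedgeA _ hh)
        obtain ⟨q, hql, hqs⟩ := exists_shorter pA hu' hw' huw hne hchst
        have := hpAmin q (fun z hz => hpAcond z (hqs z hz))
        omega
      have hshortB : u ∈ pB.support → w ∈ pB.support → False := by
        intro hu' hw'
        have hne : s(u, w) ∉ pB.edges := fun hh => hchord (hedgeB _ hh)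
        obtain ⟨q, hql, hqs⟩ := exists_shorter pB hu' hw' huw hne hchst
        have := hpBmin q (fun z hz => hpBcond z (hqs z hz))
        omega
      -- classification
      have hclassA : ∀ z ∈ pA.support, z = s' ∨ z = t' ∨ z ∈ A := hpAcond
      have hclassB : ∀ z ∈ pB.support, z = s' ∨ z = t' ∨ z ∈ B := hpBcond
      have hmemA : ∀ z, z ∈ c.support → z ∈ A → z ∈ pA.support := by
        intro z hz hzA
        rcases (hcsupp z).mp hz with h | h
        · exact h
        · rcases hclassB z h with rfl | rfl | hzB
          · exact absurd hzA hs'A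
          · exact absurd hzA ht'A
          · exact absurd hzB (hAB z hzA)
      have hmemB : ∀ z, z ∈ c.support → z ∈ B → z ∈ pB.support := by
        intro z hz hzB
        rcases (hcsupp z).mp hz with h | h
        · rcases hclassA z h with rfl | rfl | hzA
          · exact absurd hzB hs'B
          · exact absurd hzB ht'B
          · exact absurd hzB (hAB z hzA)
        · exact h
      have hst'A : s' ∈ pA.support := pA.start_mem_support
      have hst'B : s' ∈ pB.support := pB.start_mem_support
      have htt'A : t' ∈ pA.support := pA.end_mem_support
      have htt'B : t' ∈ pB.support := pB.end_mem_support
      -- no A-B chords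
      have hABadj : ∀ z z', z ∈ A → z' ∈ B → G.Adj z z' → False := by
        intro z z' hzA hz'B hadj
        exact hAB z' (ra_adj hzA hadj (hBS z' hz'B)) hz'B
      -- final case analysis
      have hclassu : u ∈ pA.support ∨ u ∈ B := by
        rcases (hcsupp u).mp hu with h | h
        · exact Or.inl h
        · rcases hclassB u h with rfl | rfl | hB'
          · exact Or.inl hst'A
          · exact Or.inl htt'A
          · exact Or.inr hB'
      have hclassw : w ∈ pA.support ∨ w ∈ B := by
        rcases (hcsupp w).mp hw with h | h
        · exact Or.inl h
        · rcases hclassB w h with rfl | rfl | hB'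
          · exact Or.inl hst'A
          · exact Or.inl htt'A
          · exact Or.inr hB'
      rcases hclassu with hu1 | hu1 <;> rcases hclassw with hw1 | hw1
      · exact hshortA hu1 hw1
      · -- u ∈ pA.support, w ∈ B
        rcases hclassA u hu1 with rfl | rfl | hA'
        · exact hshortB hst'B (hmemB w hw hw1)
        · exact hshortB htt'B (hmemB w hw hw1)
        · exact hABadj u w hA' hw1 huw
      · rcases hclassA w hw1 with rfl | rfl | hA'
        · exact hshortB (hmemB u hu hu1) hst'B
        · exact hshortB (hmemB u hu hu1) htt'B
        · exact hABadj w u hA' hu1 huw.symm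
      · exact hshortB (hmemB u hu hu1) (hmemB w hw hw1)
    -- simplicial vertex on each side
    have hclA : ∀ x ∈ A, ∀ y, G.Adj x y → y ∉ (↑S : Set V) → y ∈ A :=
      fun x hx y hadj hy => ra_adj hx hadj hy
    have hclB : ∀ x ∈ B, ∀ y, G.Adj x y → y ∉ (↑S : Set V) → y ∈ B :=
      fun x hx y hadj hy => ra_adj hx hadj hy
    have hside : ∀ (X : Set V) (r : V), X = {x | ReachAvoid G (↑S) r x} → r ∈ X →
        (∀ x ∈ X, x ∉ (↑S : Set V)) →
        (∀ x ∈ X, ∀ y, G.Adj x y → y ∉ (↑S : Set V) → y ∈ X) →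
        ∀ [inst : Fintype ↥(X ∪ ↑S)], Fintype.card ↥(X ∪ ↑S) ≤ n →
        ∃ x, x ∈ X ∧ Simplicial G x := by
      intro X r hXdef hrX hXS hXcl inst hcardX
      have hchX : IsChordal (G.induce (X ∪ ↑S)) := isChordal'_induce hch _
      by_cases hcomp : ∀ p q : ↥(X ∪ ↑S), p ≠ q → (G.induce (X ∪ ↑S)).Adj p q
      · exact ⟨r, hrX, side_lift hXS hXcl hrX (simplicial_of_complete hcomp _)⟩
      · push_neg at hcomp
        obtain ⟨p, q, hpq, hnadj'⟩ := hcomp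
        obtain ⟨v, w, hv, hw, hvw, hnadjvw⟩ := ih (G.induce (X ∪ ↑S)) hcardX hchX p q hpq hnadj'
        have hAor : ↑v ∈ X ∨ ↑w ∈ X := by
          rcases v.2 with hv' | hv'
          · exact Or.inl hv'
          · rcases w.2 with hw' | hw'
            · exact Or.inr hw'
            · exfalso
              exact hnadjvw (hSclique ↑v ↑w hv' hw' (fun h => hvw (Subtype.ext h)))
        rcases hAor with h | h
        · refine ⟨↑v, h, side_lift hXS hXcl h ?_⟩
          rwa [show ((⟨↑v, Or.inl h⟩ : ↥(X ∪ ↑S)) = v) from Subtype.ext rfl]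
        · refine ⟨↑w, h, side_lift hXS hXcl h ?_⟩
          rwa [show ((⟨↑w, Or.inl h⟩ : ↥(X ∪ ↑S)) = w) from Subtype.ext rfl]
    haveI instA : Fintype ↥(A ∪ ↑S) := (Set.toFinite _).fintype
    haveI instB : Fintype ↥(B ∪ ↑S) := (Set.toFinite _).fintype
    have hcardA : Fintype.card ↥(A ∪ ↑S) ≤ n := by
      have hb : b ∉ A ∪ (↑S : Set V) := by
        rintro (h | h)
        · exact hAB b h hbB
        · exact hbS h
      have := Fintype.card_lt_of_injective_of_notMem (Subtype.val : ↥(A ∪ ↑S) → V)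
        Subtype.val_injective (b := b) (by rintro ⟨⟨z, hz⟩, rfl⟩; exact hb hz)
      have hEq : Fintype.card ↥(A ∪ (↑S : Set V)) = Fintype.card {x // x ∈ A ∪ (↑S : Set V)} :=
        Fintype.card_congr (Equiv.refl _)
      omega
    have hcardB : Fintype.card ↥(B ∪ ↑S) ≤ n := by
      have ha : a ∉ B ∪ (↑S : Set V) := by
        rintro (h | h)
        · exact hAB a haA h
        · exact haS h
      have := Fintype.card_lt_of_injective_of_notMem (Subtype.val : ↥(B ∪ ↑S) → V)
        Subtype.val_injective (b := a) (by rintro ⟨⟨z, hz⟩, rfl⟩; exact ha hz)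
      have hEq : Fintype.card ↥(B ∪ (↑S : Set V)) = Fintype.card {x // x ∈ B ∪ (↑S : Set V)} :=
        Fintype.card_congr (Equiv.refl _)
      omega
    obtain ⟨x, hxA, hxsimp⟩ := hside A a hA haA hAS hclA hcardA
    obtain ⟨y, hyB, hysimp⟩ := hside B b hB hbB hBS hclB hcardB
    refine ⟨x, y, hxsimp, hysimp, ?_, ?_⟩
    · intro h
      exact hAB x hxA (h ▸ hyB)
    · intro h
      exact hAB y (ra_adj hxA h (hBS y hyB)) hyB

lemma exists_simplicial {V : Type u} [Fintype V] (G : SimpleGraph V)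
    (hch : IsChordal G) (hne : Nonempty V) : ∃ v, Simplicial G v := by
  by_cases hcomp : ∀ p q : V, p ≠ q → G.Adj p q
  · exact ⟨hne.some, simplicial_of_complete hcomp _⟩
  · push_neg at hcomp
    obtain ⟨a, b, hab, hnadj⟩ := hcomp
    obtain ⟨v, _, hv, _⟩ := dirac_pair (Fintype.card V) G le_rfl hch a b hab hnadj
    exact ⟨v, hv⟩

lemma exists_peo' : ∀ (n : ℕ) {V : Type u} [Fintype V] (G : SimpleGraph V),
    Fintype.card V ≤ n → IsChordal G → ∃ f : V ≃ Fin (Fintype.card V),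
      ∀ x : V, G.IsClique ({x} ∪ {u : V | G.Adj u x ∧ f u < f x}) := by
  intro n
  induction n with
  | zero =>
    intro V _ G hcard _
    have hempty : IsEmpty V := Fintype.card_eq_zero_iff.mp (Nat.le_zero.mp hcard)
    exact ⟨Fintype.equivFin V, fun v => hempty.elim v⟩
  | succ n ih =>
    intro V _ G hcard hch
    classical
    by_cases hV : IsEmpty V
    · exact ⟨Fintype.equivFin V, fun v => hV.elim v⟩
    rw [not_isEmpty_iff] at hV
    obtain ⟨v, hv⟩ := exists_simplicial G hch hV
    set X : Set V := {x | x ≠ v} with hXdef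
    haveI : Fintype ↥X := (Set.toFinite _).fintype
    set m := Fintype.card ↥X with hm
    have hcardX : m = Fintype.card V - 1 := by
      have h1 : Fintype.card {x : V // x = v} = 1 := Fintype.card_subtype_eq v
      have h2 : Fintype.card {x : V // ¬x = v} =
          Fintype.card V - Fintype.card {x : V // x = v} :=
        Fintype.card_subtype_compl _
      have h3 : m = Fintype.card {x : V // ¬x = v} := Fintype.card_congr (Equiv.refl _)
      omega
    have hpos : 1 ≤ Fintype.card V := Fintype.card_pos_iff.mpr hV
    have hcardV : Fintype.card V = m + 1 := by omega
    have hXle : Fintype.card ↥X ≤ n := by omega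
    obtain ⟨f0, hf0⟩ := ih (G.induce X) hXle (isChordal'_induce hch X)
    set f' : ↥X ≃ Fin m := f0 with hf'def
    -- build the equivalence
    have hne_val : ∀ j : Fin m, ((f'.symm j : ↥X) : V) ≠ v := fun j => (f'.symm j).2
    set e : V ≃ Fin (m + 1) :=
      { toFun := fun x => if h : x = v then Fin.last m else (f' ⟨x, h⟩).castSucc
        invFun := fun i => Fin.lastCases v (fun j => ((f'.symm j : ↥X) : V)) i
        left_inv := by
          intro x
          by_cases h : x = v
          · subst h; simp
          · simp only [dif_neg h, Fin.lastCases_castSucc]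
            simp
        right_inv := by
          intro i
          refine Fin.lastCases ?_ ?_ i
          · simp
          · intro j
            simp only [Fin.lastCases_castSucc]
            rw [dif_neg (hne_val j)]
            congr 1
            · have : (⟨((f'.symm j : ↥X) : V), hne_val j⟩ : ↥X) = f'.symm j :=
                Subtype.ext rfl
              rw [this, Equiv.apply_symm_apply] } with hedef
    have heval : ∀ x (h : x ≠ v), e x = (f' ⟨x, h⟩).castSucc := by
      intro x h; simp only [hedef, Equiv.coe_fn_mk, dif_neg h]
    have hevalv : e v = Fin.last m := by rw [hedef]; simp only [Equiv.coe_fn_mk, dif_pos]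
    refine ⟨e.trans (finCongr hcardV.symm), ?_⟩
    set f : V ≃ Fin (Fintype.card V) := e.trans (finCongr hcardV.symm) with hfdef
    have hflt : ∀ x y : V, f x < f y ↔ e x < e y := by
      intro x y
      simp only [hfdef, Equiv.trans_apply, Fin.lt_def, finCongr_apply, Fin.coe_cast]
    intro x
    by_cases hx : x = v
    · subst hx
      refine hv.subset ?_
      apply Set.union_subset_union_right
      intro u hu
      exact hu.1
    · intro u1 hu1 u2 hu2 hne12
      have hset : ∀ u, u ∈ ({x} ∪ {u : V | G.Adj u x ∧ f u < f x} : Set V) → u ≠ v := by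
        intro u hu
        rcases hu with rfl | ⟨_, hlt⟩
        · exact hx
        · intro rfl'
          subst rfl'
          rw [hflt] at hlt
          rw [hevalv, heval x hx, Fin.lt_def] at hlt
          simp only [Fin.val_last, Fin.coe_castSucc] at hlt
          have := (f' ⟨x, hx⟩).isLt
          omega
      have hmemX : ∀ u (h : u ≠ v),
          u ∈ ({x} ∪ {u : V | G.Adj u x ∧ f u < f x} : Set V) →
          (⟨u, h⟩ : ↥X) ∈ ({(⟨x, hx⟩ : ↥X)} ∪
            {u' : ↥X | (G.induce X).Adj u' ⟨x, hx⟩ ∧ f' u' < f' ⟨x, hx⟩} : Set ↥X) := by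
        intro u h hu
        rcases hu with rfl | ⟨hadj, hlt⟩
        · exact Or.inl rfl
        · refine Or.inr ⟨hadj, ?_⟩
          rw [hflt] at hlt
          rw [heval u h, heval x hx, Fin.lt_def] at hlt
          simp only [Fin.coe_castSucc] at hlt
          rw [Fin.lt_def]
          exact hlt
      have h1 := hmemX u1 (hset u1 hu1) hu1
      have h2 := hmemX u2 (hset u2 hu2) hu2
      exact hf0 ⟨x, hx⟩ h1 h2 (fun hc => hne12 (congrArg Subtype.val hc))

lemma isChordal_of_peo {V : Type*} [Fintype V] {G : SimpleGraph V}
    {f : V ≃ Fin (Fintype.card V)} (hf : IsPEO G f) : IsChordal G := by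
  classical
  intro v0 c hc hl
  obtain ⟨v, hv', hmax⟩ := c.support.toFinset.exists_max_image (fun u => f u)
    ⟨v0, by simp [c.start_mem_support]⟩
  rw [List.mem_toFinset] at hv'
  have hmax' : ∀ u ∈ c.support, f u ≤ f v := fun u hu => hmax u (by simp [hu])
  set c' := c.rotate v hv' with hc'def
  have hc' : c'.IsCycle := hc.rotate hv'
  have hlen : c'.length = c.length := by
    have := (rotate_edges c v hv').perm.length_eq
    simpa only [Walk.length_edges] using this
  obtain ⟨x, y, hx, hy, hxy, hxv, hyv, hax, hay, hchord⟩ :=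
    cycle_ends c' hc' (by omega)
  have hx' : x ∈ c.support := by
    have := (support_rotate c v hv').mem_iff.mp hx
    exact List.mem_of_mem_tail this
  have hy' : y ∈ c.support := by
    have := (support_rotate c v hv').mem_iff.mp hy
    exact List.mem_of_mem_tail this
  have hfx : f x < f v := lt_of_le_of_ne (hmax' x hx') (by simpa using fun hh => hxv (f.injective hh))
  have hfy : f y < f v := lt_of_le_of_ne (hmax' y hy') (by simpa using fun hh => hyv (f.injective hh))
  have hclique := hf v
  have haxy : G.Adj x y := by
    apply hclique (Set.mem_union_right _ ⟨hax.symm, hfx⟩) (Set.mem_union_right _ ⟨hay.symm, hfy⟩) hxy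
  refine ⟨x, y, hx', hy', haxy, fun hmem => hchord ?_⟩
  exact (rotate_edges c v hv').mem_iff.mpr hmem

end ChordalAux

/-- An undirected graph is chordal iff it has a perfect elimination ordering. -/
theorem chordal_iff_exists_peo {V : Type*} [Fintype V] (G : SimpleGraph V) :
    IsChordal G ↔ ∃ f : V ≃ Fin (Fintype.card V), IsPEO G f := by
  constructor
  · intro hch
    obtain ⟨f, hf⟩ := ChordalAux.exists_peo' (Fintype.card V) G le_rfl hch
    exact ⟨f, hf⟩
  · rintro ⟨f, hf⟩
    exact ChordalAux.isChordal_of_peo hf
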